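/- (Three observers lemma) Let R > 0. For any three suitably chosen distinct points O₁, O₂, O₃ on the sphere ∂B(0,R) ⊂ ℝⁿ (n ≥ 2), there exists c > 0 such that for every x ∈ B(0,R) and every ξ₀ ∈ ℝⁿ, the three blind cones C_{O₁,ξ₀}(x,c), C_{O₂,ξ₀}(x,c), C_{O₃,ξ₀}(x,c) have empty intersection. -/

import Mathlib

open MeasureTheory RealInnerProductSpace Metric Filter

abbrev V (n : ℕ) := EuclideanSpace ℝ (Fin n)

/-- The blind cone with apex angle `c` at `x` with respect to an observer at `x₀`
moving with velocity `ξ₀`. -/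
def blindCone {n : ℕ} (x₀ ξ₀ x : V n) (c : ℝ) : Set (V n) :=
  {ξ : V n | InnerProductGeometry.angle (x - x₀) (ξ - ξ₀) ∉ Set.Icc c (Real.pi - c)}

noncomputable def Gq {n : ℕ} (a b : V n) : ℝ := ‖a‖ ^ 2 * ‖b‖ ^ 2 - ⟪a, b⟫ ^ 2

lemma dep_aux {n : ℕ} (a b : V n) (ha : a ≠ 0) (h : ⟪a, b⟫ = ‖a‖ * ‖b‖) :
    ∃ t : ℝ, b = t • a := by
  have h2 : ¬ (⟪a, b⟫ < ‖a‖ * ‖b‖) := by rw [h]; exact lt_irrefl _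
  rw [inner_lt_norm_mul_iff_real, not_not] at h2
  have hna : ‖a‖ ≠ 0 := norm_ne_zero_iff.2 ha
  refine ⟨‖a‖⁻¹ * ‖b‖, ?_⟩
  rw [mul_smul, h2, smul_smul, inv_mul_cancel₀ hna, one_smul]

lemma dep_of_G_nonpos {n : ℕ} (a b : V n) (ha : a ≠ 0)
    (h : Gq a b ≤ 0) : ∃ t : ℝ, b = t • a := by
  rw [Gq] at h
  have hcs : |⟪a, b⟫| ≤ ‖a‖ * ‖b‖ := abs_real_inner_le_norm a b
  have heq : ⟪a, b⟫ = ‖a‖ * ‖b‖ ∨ ⟪a, b⟫ = -(‖a‖ * ‖b‖) := by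
    rcases abs_cases ⟪a, b⟫ with ⟨h1, _⟩ | ⟨h1, _⟩ <;> [left; right] <;> nlinarith
  rcases heq with h1 | h1
  · exact dep_aux a b ha h1
  · have h2 : ⟪a, -b⟫ = ‖a‖ * ‖-b‖ := by
      rw [inner_neg_right, norm_neg]; linarith
    obtain ⟨t, ht⟩ := dep_aux a (-b) ha h2
    exact ⟨-t, by rw [neg_smul, ← ht, neg_neg]⟩

set_option maxHeartbeats 1000000 in
lemma claim {n : ℕ} (i0 i1 : Fin n) (hi : i0 ≠ i1) (R : ℝ) (hR : 0 < R) (x : V n) :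
    0 < max (max
      (Gq (x - EuclideanSpace.single i0 R) (x - EuclideanSpace.single i0 (-R)))
      (Gq (x - EuclideanSpace.single i0 R) (x - EuclideanSpace.single i1 R)))
      (Gq (x - EuclideanSpace.single i0 (-R)) (x - EuclideanSpace.single i1 R)) := by
  set O₁ : V n := EuclideanSpace.single i0 R with hO1
  set O₂ : V n := EuclideanSpace.single i0 (-R) with hO2
  set O₃ : V n := EuclideanSpace.single i1 R with hO3
  have hi' : i1 ≠ i0 := hi.symm
  by_contra hf
  push_neg at hf
  have h12 : Gq (x - O₁) (x - O₂) ≤ 0 := le_trans (le_max_left _ _) (le_trans (le_max_left _ _) hf)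
  have h13 : Gq (x - O₁) (x - O₃) ≤ 0 := le_trans (le_max_right _ _) (le_trans (le_max_left _ _) hf)
  have h23 : Gq (x - O₂) (x - O₃) ≤ 0 := le_trans (le_max_right _ _) hf
  by_cases hx1 : x - O₁ = 0
  · -- x = O₁; contradict h23
    have hx : x = O₁ := by rwa [sub_eq_zero] at hx1
    subst hx
    rw [Gq] at h23
    rw [← real_inner_self_eq_norm_sq, ← real_inner_self_eq_norm_sq] at h23
    simp only [hO1, hO2, hO3, inner_sub_left, inner_sub_right,
      EuclideanSpace.inner_single_left, EuclideanSpace.single_apply, conj_trivial,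
      hi, hi', if_true, if_false, if_pos rfl, if_neg hi, if_neg hi'] at h23
    nlinarith [pow_pos hR 4, sq_nonneg R]
  by_cases hx2 : x - O₂ = 0
  · have hx : x = O₂ := by rwa [sub_eq_zero] at hx2
    subst hx
    rw [Gq] at h13
    rw [← real_inner_self_eq_norm_sq, ← real_inner_self_eq_norm_sq] at h13
    simp only [hO1, hO2, hO3, inner_sub_left, inner_sub_right,
      EuclideanSpace.inner_single_left, EuclideanSpace.single_apply, conj_trivial,
      hi, hi', if_true, if_false, if_pos rfl, if_neg hi, if_neg hi'] at h13
    nlinarith [pow_pos hR 4, sq_nonneg R]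
  · obtain ⟨s, hs⟩ := dep_of_G_nonpos (x - O₁) (x - O₂) hx1 h12
    obtain ⟨t, ht⟩ := dep_of_G_nonpos (x - O₁) (x - O₃) hx1 h13
    -- coordinates
    have e1 : s * (x i0 - O₁ i0) = x i0 - O₂ i0 := by
      have := congrArg (fun v : V n => v i0) hs
      simpa [PiLp.smul_apply, smul_eq_mul] using this.symm
    have e2 : s * (x i1 - O₁ i1) = x i1 - O₂ i1 := by
      have := congrArg (fun v : V n => v i1) hs
      simpa [PiLp.smul_apply, smul_eq_mul] using this.symm
    have e3 : t * (x i1 - O₁ i1) = x i1 - O₃ i1 := by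
      have := congrArg (fun v : V n => v i1) ht
      simpa [PiLp.smul_apply, smul_eq_mul] using this.symm
    have c10 : O₁ i0 = R := by simp [hO1, EuclideanSpace.single_apply]
    have c11 : O₁ i1 = 0 := by simp [hO1, EuclideanSpace.single_apply, hi']
    have c20 : O₂ i0 = -R := by simp [hO2, EuclideanSpace.single_apply]
    have c21 : O₂ i1 = 0 := by simp [hO2, EuclideanSpace.single_apply, hi']
    have c31 : O₃ i1 = R := by simp [hO3, EuclideanSpace.single_apply]
    rw [c10, c20] at e1
    rw [c11, c21] at e2
    rw [c11, c31] at e3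
    -- e1 : s * (x i0 - R) = x i0 + R ; e2 : s * x i1 = x i1 ; e3 : t * x i1 = x i1 - R
    by_cases hs1 : s = 1
    · rw [hs1, one_mul] at e1
      -- x i0 - R = x i0 + R
      nlinarith
    · have hxi1 : x i1 = 0 := by
        have : (s - 1) * (x i1 - 0) = 0 := by ring_nf; nlinarith [e2]
        rcases mul_eq_zero.1 this with h | h
        · exact absurd (by linarith : s = 1) hs1
        · linarith
      rw [hxi1] at e3
      nlinarith

lemma key_base {n : ℕ} (u w z : V n) (hu : ‖u‖ = 1) (hw : ‖w‖ = 1) (hz : ‖z‖ = 1)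
    (γ : ℝ) (hp : γ < ⟪u, z⟫) (hq : γ < ⟪w, z⟫) : 4 * γ - 3 < ⟪u, w⟫ := by
  have e1 : ‖u - z‖ ^ 2 = 2 - 2 * ⟪u, z⟫ := by rw [norm_sub_sq_real, hu, hz]; ring
  have e2 : ‖w - z‖ ^ 2 = 2 - 2 * ⟪w, z⟫ := by rw [norm_sub_sq_real, hw, hz]; ring
  have e3 : ‖u - w‖ ^ 2 = 2 - 2 * ⟪u, w⟫ := by rw [norm_sub_sq_real, hu, hw]; ring
  have tri : ‖u - w‖ ≤ ‖u - z‖ + ‖z - w‖ := norm_sub_le_norm_sub_add_norm_sub u z w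
  have hzw : ‖z - w‖ = ‖w - z‖ := norm_sub_rev z w
  nlinarith [sq_nonneg (‖u - z‖ - ‖w - z‖), norm_nonneg (u - w), norm_nonneg (u - z),
    norm_nonneg (w - z), sq_nonneg (‖u - z‖ + ‖w - z‖ - ‖u - w‖)]

lemma key_abs {n : ℕ} (u w z : V n) (hu : ‖u‖ = 1) (hw : ‖w‖ = 1) (hz : ‖z‖ = 1)
    (γ : ℝ) (hp : γ < |⟪u, z⟫|) (hq : γ < |⟪w, z⟫|) : 4 * γ - 3 < |⟪u, w⟫| := by
  have hnu : ‖-u‖ = 1 := by rw [norm_neg]; exact hu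
  have hnw : ‖-w‖ = 1 := by rw [norm_neg]; exact hw
  rcases lt_abs.1 hp with h1 | h1 <;> rcases lt_abs.1 hq with h2 | h2
  · exact lt_of_lt_of_le (key_base u w z hu hw hz γ h1 h2) (le_abs_self _)
  · have h2' : γ < ⟪-w, z⟫ := by rwa [inner_neg_left]
    have := key_base u (-w) z hu hnw hz γ h1 h2'
    rw [inner_neg_right] at this
    exact lt_of_lt_of_le this (neg_le_abs _)
  · have h1' : γ < ⟪-u, z⟫ := by rwa [inner_neg_left]
    have := key_base (-u) w z hnu hw hz γ h1' h2
    rw [inner_neg_left] at this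
    exact lt_of_lt_of_le this (neg_le_abs _)
  · have h1' : γ < ⟪-u, z⟫ := by rwa [inner_neg_left]
    have h2' : γ < ⟪-w, z⟫ := by rwa [inner_neg_left]
    have := key_base (-u) (-w) z hnu hnw hz γ h1' h2'
    rw [inner_neg_left, inner_neg_right, neg_neg] at this
    exact lt_of_lt_of_le this (le_abs_self _)

lemma cos_bound {n : ℕ} (a v : V n) (ha : a ≠ 0) (hv : v ≠ 0) (c : ℝ)
    (hc0 : 0 < c) (hc1 : c ≤ 1 / 2)
    (h : InnerProductGeometry.angle a v ∉ Set.Icc c (Real.pi - c)) :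
    Real.cos c < |⟪‖a‖⁻¹ • a, ‖v‖⁻¹ • v⟫| := by
  set θ := InnerProductGeometry.angle a v with hθdef
  have hθ0 : 0 ≤ θ := InnerProductGeometry.angle_nonneg a v
  have hθπ : θ ≤ Real.pi := InnerProductGeometry.angle_le_pi a v
  have hπ : (3:ℝ) < Real.pi := Real.pi_gt_three
  have hcπ : c ≤ Real.pi := by linarith
  have hiz : ⟪‖a‖⁻¹ • a, ‖v‖⁻¹ • v⟫ = Real.cos θ := by
    rw [real_inner_smul_left, real_inner_smul_right, InnerProductGeometry.cos_angle]
    have hna : ‖a‖ ≠ 0 := norm_ne_zero_iff.2 ha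
    have hnv : ‖v‖ ≠ 0 := norm_ne_zero_iff.2 hv
    field_simp
  rw [hiz]
  have hcases : θ < c ∨ Real.pi - c < θ := by
    by_contra hcon
    push_neg at hcon
    exact h ⟨hcon.1, hcon.2⟩
  rcases hcases with h1 | h1
  · have := Real.cos_lt_cos_of_nonneg_of_le_pi hθ0 hcπ h1
    exact lt_of_lt_of_le this (le_abs_self _)
  · have h2 : Real.cos θ < Real.cos (Real.pi - c) :=
      Real.cos_lt_cos_of_nonneg_of_le_pi (by linarith) hθπ h1
    rw [Real.cos_pi_sub] at h2
    have : Real.cos c < -Real.cos θ := by linarith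
    exact lt_of_lt_of_le this (neg_le_abs _)

set_option maxHeartbeats 1000000 in
lemma two_cones {n : ℕ} (R m c : ℝ) (hR : 0 < R) (hm : 0 < m)
    (hc : c = min (Real.sqrt m / (16 * R ^ 2)) (1 / 2))
    (a b v : V n) (ha : a ≠ 0) (hb : b ≠ 0) (hA : ‖a‖ ≤ 2 * R) (hB : ‖b‖ ≤ 2 * R)
    (hG : m ≤ ‖a‖ ^ 2 * ‖b‖ ^ 2 - ⟪a, b⟫ ^ 2)
    (h1 : InnerProductGeometry.angle a v ∉ Set.Icc c (Real.pi - c))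
    (h2 : InnerProductGeometry.angle b v ∉ Set.Icc c (Real.pi - c)) : False := by
  have hπ : (3:ℝ) < Real.pi := Real.pi_gt_three
  have hc0 : 0 < c := by
    rw [hc]
    apply lt_min
    · positivity
    · norm_num
  have hc1 : c ≤ 1 / 2 := by rw [hc]; exact min_le_right _ _
  -- c^2 * (256 * R^4) ≤ m
  have hc2 : c ^ 2 * (256 * R ^ 4) ≤ m := by
    have h3 : c ≤ Real.sqrt m / (16 * R ^ 2) := by rw [hc]; exact min_le_left _ _
    have h4 : c ^ 2 ≤ (Real.sqrt m / (16 * R ^ 2)) ^ 2 := by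
      apply pow_le_pow_left₀ hc0.le h3
    rw [div_pow, Real.sq_sqrt hm.le] at h4
    have h5 : ((16:ℝ) * R ^ 2) ^ 2 = 256 * R ^ 4 := by ring
    rw [h5] at h4
    have h6 : (0:ℝ) < 256 * R ^ 4 := by positivity
    calc c ^ 2 * (256 * R ^ 4) ≤ m / (256 * R ^ 4) * (256 * R ^ 4) := by
          apply mul_le_mul_of_nonneg_right h4 h6.le
      _ = m := by field_simp
  by_cases hv : v = 0
  · subst hv
    rw [InnerProductGeometry.angle_zero_right] at h1
    exact h1 ⟨by linarith, by linarith⟩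
  have hbd1 := cos_bound a v ha hv c hc0 hc1 h1
  have hbd2 := cos_bound b v hb hv c hc0 hc1 h2
  set γ := Real.cos c with hγdef
  set u := ‖a‖⁻¹ • a
  set w := ‖b‖⁻¹ • b
  set z := ‖v‖⁻¹ • v
  have hna : ‖a‖ ≠ 0 := norm_ne_zero_iff.2 ha
  have hnb : ‖b‖ ≠ 0 := norm_ne_zero_iff.2 hb
  have hnv : ‖v‖ ≠ 0 := norm_ne_zero_iff.2 hv
  have hu : ‖u‖ = 1 := by
    rw [norm_smul, norm_inv, norm_norm, inv_mul_cancel₀ hna]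
  have hw : ‖w‖ = 1 := by
    rw [norm_smul, norm_inv, norm_norm, inv_mul_cancel₀ hnb]
  have hz : ‖z‖ = 1 := by
    rw [norm_smul, norm_inv, norm_norm, inv_mul_cancel₀ hnv]
  have hkey0 := key_abs u w z hu hw hz γ hbd1 hbd2
  obtain ⟨r, hrdef⟩ : ∃ r : ℝ, r = ⟪u, w⟫ := ⟨_, rfl⟩
  have hkey : 4 * γ - 3 < |r| := by rw [hrdef]; exact hkey0
  -- r^2 * (‖a‖*‖b‖)^2 = ⟪a,b⟫^2
  have hr2 : r ^ 2 * (‖a‖ * ‖b‖) ^ 2 = ⟪a, b⟫ ^ 2 := by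
    have : r = ⟪a, b⟫ / (‖a‖ * ‖b‖) := by
      rw [hrdef, real_inner_smul_left, real_inner_smul_right]
      field_simp
    rw [this]
    field_simp
  have hr1 : |r| ≤ 1 := by
    have h6 := abs_real_inner_le_norm u w
    rw [hu, hw, mul_one] at h6
    rw [hrdef]; exact h6
  -- F1 : r^2 * (16*R^4) ≤ 16*R^4 - m
  have hAB : (‖a‖ * ‖b‖) ^ 2 ≤ 16 * R ^ 4 := by
    have h7 : ‖a‖ * ‖b‖ ≤ (2 * R) * (2 * R) :=
      mul_le_mul hA hB (norm_nonneg b) (by positivity)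
    have h8 : 0 ≤ ‖a‖ * ‖b‖ := by positivity
    nlinarith
  have hP : r ^ 2 * (‖a‖ * ‖b‖) ^ 2 ≤ (‖a‖ * ‖b‖) ^ 2 - m := by nlinarith [hr2, hG]
  have hr1' : r ^ 2 ≤ 1 := by
    rw [← sq_abs]
    nlinarith [abs_nonneg r]
  have hF1 : r ^ 2 * (16 * R ^ 4) ≤ 16 * R ^ 4 - m := by
    have h9 := mul_le_mul_of_nonneg_right hr1' (sub_nonneg.2 hAB)
    nlinarith [hP]
  -- F3 : 1 - c^2/2 ≤ γ
  have hF3 : 1 - c ^ 2 / 2 ≤ γ := Real.one_sub_sq_div_two_le_cos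
  -- F5 : m ≤ 16 * R^4
  have hF5 : m ≤ 16 * R ^ 4 := by nlinarith [sq_nonneg ⟪a, b⟫]
  have hT : (0:ℝ) < 16 * R ^ 4 := by positivity
  -- (4γ-3)*(8*(16R⁴)) ≥ 8*(16R⁴) - m  and 4γ-3 > 0
  have hγ2 : 8 * (16 * R ^ 4) - m ≤ (4 * γ - 3) * (8 * (16 * R ^ 4)) := by
    have h10 : 1 - 2 * c ^ 2 ≤ 4 * γ - 3 := by linarith
    have h11 := mul_le_mul_of_nonneg_right h10 (by positivity : (0:ℝ) ≤ 8 * (16 * R ^ 4))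
    nlinarith [hc2]
  have hpos : 0 < 4 * γ - 3 := by
    by_contra hcon
    push_neg at hcon
    have h12 : (4 * γ - 3) * (8 * (16 * R ^ 4)) ≤ 0 :=
      mul_nonpos_of_nonpos_of_nonneg hcon (by positivity)
    nlinarith [hF5]
  have hsq : (4 * γ - 3) ^ 2 < r ^ 2 := by
    rw [← sq_abs r]
    nlinarith [hkey, hpos, abs_nonneg r]
  have hsqT : (4 * γ - 3) ^ 2 * (16 * R ^ 4) < 16 * R ^ 4 - m :=
    lt_of_lt_of_le (mul_lt_mul_of_pos_right hsq hT) hF1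
  have hγ2sq : (8 * (16 * R ^ 4) - m) ^ 2 ≤ ((4 * γ - 3) * (8 * (16 * R ^ 4))) ^ 2 :=
    pow_le_pow_left₀ (by nlinarith [hF5]) hγ2 2
  nlinarith [mul_lt_mul_of_pos_right hsqT hT, hγ2sq, mul_pos hm (pow_pos hR 4)]

lemma Gq_cont {n : ℕ} (p q : V n) : Continuous fun x : V n => Gq (x - p) (x - q) := by
  unfold Gq
  have h1 : Continuous fun x : V n => x - p := continuous_id.sub continuous_const
  have h2 : Continuous fun x : V n => x - q := continuous_id.sub continuous_const
  exact ((h1.norm.pow 2).mul (h2.norm.pow 2)).sub ((h1.inner h2).pow 2)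

set_option maxHeartbeats 1000000 in
theorem three_observers (n : ℕ) (hn : 2 ≤ n) (R : ℝ) (hR : 0 < R) :
    ∃ O₁ O₂ O₃ : V n,
      O₁ ∈ Metric.sphere (0 : V n) R ∧ O₂ ∈ Metric.sphere (0 : V n) R ∧
      O₃ ∈ Metric.sphere (0 : V n) R ∧
      O₁ ≠ O₂ ∧ O₁ ≠ O₃ ∧ O₂ ≠ O₃ ∧
      ∃ c : ℝ, 0 < c ∧
        ∀ x ∈ Metric.ball (0 : V n) R, ∀ ξ₀ : V n,
          blindCone O₁ ξ₀ x c ∩ blindCone O₂ ξ₀ x c ∩ blindCone O₃ ξ₀ x c = ∅ := by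
  have h0 : 0 < n := by omega
  have h1 : 1 < n := by omega
  set i0 : Fin n := ⟨0, h0⟩
  set i1 : Fin n := ⟨1, h1⟩
  have hi : i0 ≠ i1 := by simp [i0, i1, Fin.ext_iff]
  set O₁ : V n := EuclideanSpace.single i0 R with hO1
  set O₂ : V n := EuclideanSpace.single i0 (-R) with hO2
  set O₃ : V n := EuclideanSpace.single i1 R with hO3
  have hnO : ∀ r : ℝ, ∀ i : Fin n, ‖EuclideanSpace.single i r‖ = |r| := by
    intro r i
    rw [EuclideanSpace.norm_single, Real.norm_eq_abs]
  have hs1 : O₁ ∈ Metric.sphere (0 : V n) R := by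
    rw [mem_sphere_zero_iff_norm, hO1, hnO, abs_of_pos hR]
  have hs2 : O₂ ∈ Metric.sphere (0 : V n) R := by
    rw [mem_sphere_zero_iff_norm, hO2, hnO, abs_neg, abs_of_pos hR]
  have hs3 : O₃ ∈ Metric.sphere (0 : V n) R := by
    rw [mem_sphere_zero_iff_norm, hO3, hnO, abs_of_pos hR]
  have hne12 : O₁ ≠ O₂ := by
    intro h
    have := congrArg (fun v : V n => v i0) h
    simp [hO1, hO2, EuclideanSpace.single_apply] at this
    linarith
  have hne13 : O₁ ≠ O₃ := by
    intro h
    have := congrArg (fun v : V n => v i0) h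
    simp [hO1, hO3, EuclideanSpace.single_apply, hi.symm] at this
    linarith
  have hne23 : O₂ ≠ O₃ := by
    intro h
    have := congrArg (fun v : V n => v i0) h
    simp [hO2, hO3, EuclideanSpace.single_apply, hi.symm] at this
    linarith
  refine ⟨O₁, O₂, O₃, hs1, hs2, hs3, hne12, hne13, hne23, ?_⟩
  -- compactness: minimum of f on the closed ball
  set f : V n → ℝ := fun x =>
    max (max (Gq (x - O₁) (x - O₂)) (Gq (x - O₁) (x - O₃))) (Gq (x - O₂) (x - O₃)) with hf
  have hfc : Continuous f :=
    ((Gq_cont O₁ O₂).max (Gq_cont O₁ O₃)).max (Gq_cont O₂ O₃)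
  obtain ⟨x₀, hx₀, hmin'⟩ :=
    (isCompact_closedBall (0 : V n) R).exists_isMinOn
      ⟨0, by simp [hR.le]⟩ hfc.continuousOn
  have hmin : ∀ y ∈ Metric.closedBall (0 : V n) R, f x₀ ≤ f y := fun y hy => hmin' hy
  set m : ℝ := f x₀ with hm
  have hmpos : 0 < m := claim i0 i1 hi R hR x₀
  set c : ℝ := min (Real.sqrt m / (16 * R ^ 2)) (1 / 2) with hcdef
  have hc0 : 0 < c := by
    apply lt_min
    · positivity
    · norm_num
  refine ⟨c, hc0, ?_⟩
  intro x hx ξ₀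
  rw [Set.eq_empty_iff_forall_notMem]
  intro ξ hξ
  obtain ⟨⟨hξ1, hξ2⟩, hξ3⟩ := hξ
  have hb1 : InnerProductGeometry.angle (x - O₁) (ξ - ξ₀) ∉ Set.Icc c (Real.pi - c) := hξ1
  have hb2 : InnerProductGeometry.angle (x - O₂) (ξ - ξ₀) ∉ Set.Icc c (Real.pi - c) := hξ2
  have hb3 : InnerProductGeometry.angle (x - O₃) (ξ - ξ₀) ∉ Set.Icc c (Real.pi - c) := hξ3
  have hxR : ‖x‖ < R := mem_ball_zero_iff.1 hx
  have hO1n : ‖O₁‖ = R := mem_sphere_zero_iff_norm.1 hs1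
  have hO2n : ‖O₂‖ = R := mem_sphere_zero_iff_norm.1 hs2
  have hO3n : ‖O₃‖ = R := mem_sphere_zero_iff_norm.1 hs3
  have hne : ∀ O : V n, ‖O‖ = R → x - O ≠ 0 := by
    intro O hO h
    rw [sub_eq_zero] at h
    rw [h, hO] at hxR
    exact lt_irrefl _ hxR
  have hle : ∀ O : V n, ‖O‖ = R → ‖x - O‖ ≤ 2 * R := by
    intro O hO
    calc ‖x - O‖ ≤ ‖x‖ + ‖O‖ := norm_sub_le x O
      _ ≤ 2 * R := by rw [hO]; linarith
  have hfx : m ≤ f x := hmin x (ball_subset_closedBall hx)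
  have hGx : m ≤ Gq (x - O₁) (x - O₂) ∨ m ≤ Gq (x - O₁) (x - O₃) ∨
      m ≤ Gq (x - O₂) (x - O₃) := by
    rcases le_max_iff.1 hfx with h | h
    · rcases le_max_iff.1 h with h' | h'
      · exact Or.inl h'
      · exact Or.inr (Or.inl h')
    · exact Or.inr (Or.inr h)
  rcases hGx with h | h | h
  · exact two_cones R m c hR hmpos hcdef (x - O₁) (x - O₂) (ξ - ξ₀)
      (hne O₁ hO1n) (hne O₂ hO2n) (hle O₁ hO1n) (hle O₂ hO2n) h hb1 hb2
  · exact two_cones R m c hR hmpos hcdef (x - O₁) (x - O₃) (ξ - ξ₀)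
      (hne O₁ hO1n) (hne O₃ hO3n) (hle O₁ hO1n) (hle O₃ hO3n) h hb1 hb3
  · exact two_cones R m c hR hmpos hcdef (x - O₂) (x - O₃) (ξ - ξ₀)
      (hne O₂ hO2n) (hne O₃ hO3n) (hle O₂ hO2n) (hle O₃ hO3n) h hb2 hb3
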